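/- arXiv:0803.4178 — 2 statements merged into one kernel-verified Lean document; each statement's English description precedes it below -/
import Mathlib

section
/- Let η_1, ..., η_n be complex numbers with multiplicities m_1, ..., m_n ≥ 1 and N = ∑ m_j, and let G(X) = ∏_{j=1}^n (X - η_j)^{m_j}. For k ≥ N, the quotient of X^k by G is Q(X) = ∑_{u=0}^{k-N} X^{k-N-u} ∑_{w_1+...+w_n=u} ∏_{l=1}^n [(w_l + m_l - 1)!/(w_l! (m_l - 1)!)] η_l^{w_l}. -/
open Polynomial

private lemma aux_one_factor (η : ℂ) (d : ℕ) :
    ((1 - PowerSeries.C η * PowerSeries.X) ^ (d + 1)) *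
      PowerSeries.mk (fun u => (((u + (d + 1) - 1).factorial : ℂ) /
        ((u).factorial * ((d + 1) - 1).factorial)) * η ^ u) = 1 := by
  have hmk : PowerSeries.mk (fun u => (((u + (d + 1) - 1).factorial : ℂ) /
        ((u).factorial * ((d + 1) - 1).factorial)) * η ^ u)
      = PowerSeries.rescale η (PowerSeries.invOneSubPow ℂ (d + 1)).val := by
    ext u
    rw [PowerSeries.coeff_mk, PowerSeries.coeff_rescale,
      PowerSeries.invOneSubPow_val_succ_eq_mk_add_choose, PowerSeries.coeff_mk]
    have h1 : u + (d + 1) - 1 = d + u := by omega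
    have h2 : (d + 1) - 1 = d := by omega
    rw [h1, h2, mul_comm]
    congr 1
    rw [Nat.cast_choose ℂ (by omega : d ≤ d + u)]
    have : d + u - d = u := by omega
    rw [this, mul_comm]
  have hpow : ((1 - PowerSeries.C η * PowerSeries.X) ^ (d + 1) : PowerSeries ℂ)
      = PowerSeries.rescale η ((1 - PowerSeries.X) ^ (d + 1)) := by
    rw [map_pow, map_sub, map_one, PowerSeries.rescale_X]
  rw [hmk, hpow, ← map_mul, ← PowerSeries.invOneSubPow_inv_eq_one_sub_pow,
    (PowerSeries.invOneSubPow ℂ (d + 1)).inv_val, map_one]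

private lemma aux_mk_prod (n : ℕ) (g : Fin n → ℕ → ℂ) :
    (PowerSeries.mk (fun u => ∑ w ∈ Finset.Nat.antidiagonalTuple n u, ∏ l, g l (w l)) : PowerSeries ℂ)
      = ∏ l, PowerSeries.mk (g l) := by
  ext d
  rw [PowerSeries.coeff_mk, PowerSeries.coeff_prod]
  refine Finset.sum_nbij' (fun w => Finsupp.equivFunOnFinite.symm w) (fun f => ⇑f) ?_ ?_ ?_ ?_ ?_
  · intro w hw
    rw [Finset.Nat.mem_antidiagonalTuple] at hw
    rw [Finset.mem_finsuppAntidiag]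
    exact ⟨by simpa using hw, Finset.subset_univ _⟩
  · intro f hf
    rw [Finset.mem_finsuppAntidiag] at hf
    rw [Finset.Nat.mem_antidiagonalTuple]
    simpa using hf.1
  · intro w _; rfl
  · intro f _; simp
  · intro w _
    simp only [PowerSeries.coeff_mk]
    rfl

private lemma aux_reflect_sum {N : ℕ} {ι : Type*} (s : Finset ι) (f : ι → ℂ[X]) :
    reflect N (∑ i ∈ s, f i) = ∑ i ∈ s, reflect N (f i) := by
  induction s using Finset.cons_induction with
  | empty => simp [reflect_zero]
  | cons a s ha ih => rw [Finset.sum_cons, Finset.sum_cons, reflect_add, ih]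

private lemma aux_natDeg_lin (η : ℂ) : ((1 : ℂ[X]) - C η * X).natDegree ≤ 1 :=
  le_trans (natDegree_sub_le _ _) (max_le (by simp)
    (le_trans (natDegree_mul_le) (by simp)))

private lemma aux_natDeg_pow (η : ℂ) (d : ℕ) : (((1 : ℂ[X]) - C η * X) ^ d).natDegree ≤ d :=
  le_trans natDegree_pow_le (by
    calc d * ((1 : ℂ[X]) - C η * X).natDegree ≤ d * 1 :=
      Nat.mul_le_mul_left d (aux_natDeg_lin η)
    _ = d := by omega)

private lemma aux_natDeg_prod (n : ℕ) (η : Fin n → ℂ) (m : Fin n → ℕ) :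
    (∏ j, ((1 : ℂ[X]) - C (η j) * X) ^ m j).natDegree ≤ ∑ j, m j :=
  le_trans (natDegree_prod_le _ _) (Finset.sum_le_sum fun i _ => aux_natDeg_pow (η i) (m i))

private lemma aux_reflect_lin (η : ℂ) : reflect 1 ((1 : ℂ[X]) - C η * X) = X - C η := by
  have h : ((1 : ℂ[X]) - C η * X) = C 1 * X ^ 0 + C (-η) * X ^ 1 := by
    simp [map_neg]; ring
  rw [h, reflect_add, reflect_C_mul_X_pow, reflect_C_mul_X_pow]
  simp [revAt_le, map_neg]
  ring

private lemma aux_reflect_pow (η : ℂ) (d : ℕ) :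
    reflect d (((1 : ℂ[X]) - C η * X) ^ d) = (X - C η) ^ d := by
  induction d with
  | zero => simp
  | succ d ih =>
    have h1 : (((1 : ℂ[X]) - C η * X) ^ (d + 1)) = ((1 : ℂ[X]) - C η * X) ^ d * ((1 : ℂ[X]) - C η * X) := by ring
    rw [h1, reflect_mul _ _ (aux_natDeg_pow η d) (aux_natDeg_lin η), ih, aux_reflect_lin]
    ring

private lemma aux_reflect_prod (n : ℕ) (η : Fin n → ℂ) (m : Fin n → ℕ) :
    reflect (∑ j, m j) (∏ j, ((1 : ℂ[X]) - C (η j) * X) ^ m j)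
      = ∏ j, (X - C (η j)) ^ m j := by
  induction n with
  | zero => simp
  | succ n ih =>
    rw [Fin.sum_univ_succ, Fin.prod_univ_succ, Fin.prod_univ_succ,
      reflect_mul _ _ (aux_natDeg_pow (η 0) (m 0))
        (aux_natDeg_prod n (fun i => η i.succ) (fun i => m i.succ)),
      aux_reflect_pow, ih]

/-- Quotient of `X^k` by `G(X) = ∏_{j=1}^n (X - η_j)^{m_j}` for `k ≥ N = ∑ m_j`:
`Q(X) = ∑_{u=0}^{k-N} X^{k-N-u} ∑_{w_1+⋯+w_n=u} ∏_l C(w_l+m_l-1, w_l) η_l^{w_l}`. -/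
theorem quotient_pow_by_prod_pow_linear (n k : ℕ) (η : Fin n → ℂ) (m : Fin n → ℕ)
    (hm : ∀ j, 1 ≤ m j) (hk : (∑ j, m j) ≤ k) :
    (X ^ k : ℂ[X]) /ₘ (∏ j, (X - C (η j)) ^ m j) =
      ∑ u ∈ Finset.range (k - (∑ j, m j) + 1),
        C (∑ w ∈ Finset.Nat.antidiagonalTuple n u, ∏ l,
            (((w l + m l - 1).factorial : ℂ) /
              ((w l).factorial * (m l - 1).factorial) * η l ^ w l)) *
          X ^ (k - (∑ j, m j) - u) := by
  set N := ∑ j, m j with hN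
  set K := k - N with hK
  set c : ℕ → ℂ := fun u => ∑ w ∈ Finset.Nat.antidiagonalTuple n u, ∏ l,
      (((w l + m l - 1).factorial : ℂ) /
        ((w l).factorial * (m l - 1).factorial) * η l ^ w l) with hc
  set A : ℂ[X] := ∏ j, ((1 : ℂ[X]) - C (η j) * X) ^ m j with hA
  set P : ℂ[X] := ∑ u ∈ Finset.range (K + 1), C (c u) * X ^ u with hP
  set G : ℂ[X] := ∏ j, (X - C (η j)) ^ m j with hG
  -- power series inverse identity
  have hAB : (A : PowerSeries ℂ) * PowerSeries.mk c = 1 := by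
    have h1 : (A : PowerSeries ℂ) = ∏ j, ((1 - PowerSeries.C (η j) * PowerSeries.X) ^ m j) := by
      rw [hA, ← Polynomial.coeToPowerSeries.ringHom_apply, map_prod]
      refine Finset.prod_congr rfl fun j _ => ?_
      simp [map_pow, map_sub, map_mul, map_one]
    have h2 : (PowerSeries.mk c : PowerSeries ℂ) = ∏ l, PowerSeries.mk
        (fun u => ((u + m l - 1).factorial : ℂ) /
          ((u).factorial * (m l - 1).factorial) * η l ^ u) := by
      exact aux_mk_prod n (fun l u => ((u + m l - 1).factorial : ℂ) /
        ((u).factorial * (m l - 1).factorial) * η l ^ u)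
    rw [h1, h2, ← Finset.prod_mul_distrib]
    refine Finset.prod_eq_one fun j _ => ?_
    obtain ⟨d, hd⟩ : ∃ d, m j = d + 1 := ⟨m j - 1, by have := hm j; omega⟩
    rw [hd]
    exact aux_one_factor (η j) d
  -- coefficients of P
  have hcoeffP : ∀ j, P.coeff j = if j < K + 1 then c j else 0 := by
    intro j
    rw [hP, finset_sum_coeff]
    simp only [coeff_C_mul, coeff_X_pow, mul_ite, mul_one, mul_zero]
    rw [Finset.sum_ite_eq (Finset.range (K + 1)) j c]
    simp [Finset.mem_range]
  -- A * P has the right low coefficients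
  have hAP : ∀ s : ℕ, s ≤ K → (A * P).coeff s = if s = 0 then 1 else 0 := by
    intro s hs
    have e1 : (A * P).coeff s = PowerSeries.coeff s ((A : PowerSeries ℂ) * (P : PowerSeries ℂ)) := by
      rw [← Polynomial.coe_mul, Polynomial.coeff_coe]
    have e2 : PowerSeries.coeff s ((A : PowerSeries ℂ) * (P : PowerSeries ℂ))
        = PowerSeries.coeff s ((A : PowerSeries ℂ) * PowerSeries.mk c) := by
      rw [PowerSeries.coeff_mul, PowerSeries.coeff_mul]
      refine Finset.sum_congr rfl fun p hp => ?_
      rw [Finset.HasAntidiagonal.mem_antidiagonal] at hp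
      congr 1
      rw [Polynomial.coeff_coe, hcoeffP, PowerSeries.coeff_mk, if_pos (by omega)]
    rw [e1, e2, hAB]
    simp [PowerSeries.coeff_one]
  -- degree bounds
  have hdegA : A.natDegree ≤ N := aux_natDeg_prod n η m
  have hdegP : P.natDegree ≤ K := by
    refine natDegree_sum_le_of_forall_le _ _ fun u hu => ?_
    refine le_trans natDegree_mul_le ?_
    rw [Finset.mem_range] at hu
    simp [natDegree_X_pow]
    omega
  have hNK : N + K = k := by omega
  -- G * reflect K P = reflect k (A * P)
  have hGQ : G * reflect K P = reflect k (A * P) := by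
    rw [← hNK, reflect_mul A P hdegA hdegP, hG, ← aux_reflect_prod n η m, hA]
  have hmonic : G.Monic := monic_prod_of_monic _ _ fun j _ => (monic_X_sub_C _).pow _
  have hdegG : G.natDegree = N := by
    rw [hG, natDegree_prod _ _ fun j _ => pow_ne_zero _ (X_sub_C_ne_zero _)]
    simp [natDegree_pow, natDegree_X_sub_C, hN]
  -- the remainder has degree < N
  have hdegAP : (A * P).natDegree ≤ k := by
    refine le_trans natDegree_mul_le ?_
    omega
  have hrem : (X ^ k - G * reflect K P : ℂ[X]).degree < G.degree := by
    have hGd : G.degree = (N : ℕ) := by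
      rw [degree_eq_natDegree hmonic.ne_zero, hdegG]
    rw [hGd]
    rw [degree_lt_iff_coeff_zero]
    intro d hd
    rw [coeff_sub, hGQ, coeff_reflect]
    by_cases hdk : d ≤ k
    · rw [revAt_le hdk, hAP (k - d) (by omega), coeff_X_pow]
      by_cases hde : d = k
      · subst hde; simp
      · rw [if_neg hde, if_neg (by omega)]
        ring
    · rw [revAt_eq_self_of_lt (by omega), coeff_X_pow, if_neg (by omega),
        coeff_eq_zero_of_natDegree_lt (by omega)]
      ring
  have key := Polynomial.div_modByMonic_unique (f := (X ^ k : ℂ[X])) (g := G)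
    (reflect K P) (X ^ k - G * reflect K P) hmonic ⟨by ring, hrem⟩
  rw [key.1]
  -- identify reflect K P with the stated sum
  rw [hP, aux_reflect_sum]
  refine Finset.sum_congr rfl fun u hu => ?_
  rw [Finset.mem_range] at hu
  rw [reflect_C_mul_X_pow, revAt_le (by omega : u ≤ K)]
end

section
/- Let z ∈ B_2 ⊂ ℂ², ζ ∈ S_2 with ζ_2 ≠ 0, and 0 < r < 1 with |ζ_1| = r, |ζ_2| = √(1-r²). Then |(1 - r²) z_2| < |ζ_2| and |r² z_1 ζ_2 / (ζ_2 - (1-r²) z_2)| < r = |ζ_1|. -/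
/-- For `z` in the open unit ball of `ℂ²`, `ζ` on the unit sphere with `ζ₂ ≠ 0`,
`|ζ₁| = r`, `|ζ₂| = √(1-r²)`: `|(1-r²) z₂| < |ζ₂|` and
`|r² z₁ ζ₂ / (ζ₂ - (1-r²) z₂)| < r`. -/
theorem abs_residue_bounds (z₁ z₂ ζ₁ ζ₂ : ℂ) (r : ℝ) (hr0 : 0 < r) (hr1 : r < 1)
    (hz : ‖z₁‖ ^ 2 + ‖z₂‖ ^ 2 < 1)
    (hζ : ‖ζ₁‖ ^ 2 + ‖ζ₂‖ ^ 2 = 1)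
    (hζ2 : ζ₂ ≠ 0)
    (hζ1r : ‖ζ₁‖ = r) (hζ2r : ‖ζ₂‖ = Real.sqrt (1 - r ^ 2)) :
    ‖(1 - (r:ℂ) ^ 2) * z₂‖ < ‖ζ₂‖ ∧
    ‖(r:ℂ) ^ 2 * z₁ * ζ₂ / (ζ₂ - (1 - (r:ℂ) ^ 2) * z₂)‖ < r := by
  set a := ‖z₁‖ with ha
  set b := ‖z₂‖ with hb
  set s := ‖ζ₂‖ with hs
  have ha0 : 0 ≤ a := norm_nonneg _
  have hb0 : 0 ≤ b := norm_nonneg _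
  have hs0 : 0 < s := norm_pos_iff.mpr hζ2
  have hrs : r ^ 2 + s ^ 2 = 1 := by rw [← hζ1r]; exact hζ
  -- Cauchy–Schwarz style key inequality
  have hkey : r * a + s * b < 1 := by
    nlinarith [sq_nonneg (r * b - s * a), sq_nonneg (r * a + s * b),
      mul_nonneg (mul_nonneg hr0.le ha0) (mul_nonneg hs0.le hb0)]
  have habs1 : ‖(1 - (r:ℂ) ^ 2) * z₂‖ = s ^ 2 * b := by
    rw [norm_mul]
    have : (1 - (r:ℂ) ^ 2) = ((1 - r ^ 2 : ℝ) : ℂ) := by push_cast; ring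
    rw [this, Complex.norm_real, Real.norm_eq_abs, abs_of_nonneg (by nlinarith), ← hb]
    nlinarith
  have h1 : s ^ 2 * b < s := by
    have hsb : s * b < 1 := by nlinarith
    nlinarith
  refine ⟨by rw [habs1]; exact h1, ?_⟩
  -- second bound
  have hden : s - s ^ 2 * b ≤ ‖ζ₂ - (1 - (r:ℂ) ^ 2) * z₂‖ := by
    have h := norm_sub_norm_le ζ₂ ((1 - (r:ℂ) ^ 2) * z₂)
    rw [habs1] at h
    linarith
  have hden0 : 0 < ‖ζ₂ - (1 - (r:ℂ) ^ 2) * z₂‖ := by nlinarith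
  rw [norm_div, norm_mul, norm_mul, div_lt_iff₀ hden0]
  have habsr : ‖(r:ℂ) ^ 2‖ = r ^ 2 := by
    rw [← Complex.ofReal_pow, Complex.norm_real, Real.norm_eq_abs, abs_of_nonneg (by positivity)]
  rw [habsr, ← ha, ← hs]
  -- r^2 * a * s < r * abs(denom)
  have hstep : r ^ 2 * a * s < r * (s - s ^ 2 * b) := by
    nlinarith [mul_lt_mul_of_pos_left hkey (mul_pos hr0 hs0)]
  nlinarith [mul_le_mul_of_nonneg_left hden hr0.le]
end
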